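/- Let X be a finite set of cardinality N and F : X → Y two-to-one. If K is a uniformly random subset of X of cardinality k, then the probability that K contains no collision (F is injective on K) is at most ∏_{i=0}^{k−1} (1 − i/(N−i)) ≤ (1 − (k−1)/(2N))^{k−1}. -/

import Mathlib

open Finset

lemma step_lemma {X Y : Type*} [Fintype X] [DecidableEq X] [DecidableEq Y] (F : X → Y)
    (hF : ∀ y ∈ Finset.image F Finset.univ,
      (Finset.univ.filter (fun x => F x = y)).card = 2)
    (N : ℕ) (hN : Fintype.card X = N) (j : ℕ) :
    ((Finset.univ.powersetCard (j+1)).filter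
        (fun K : Finset X => Set.InjOn F (K : Set X))).card * (j+1) ≤
    ((Finset.univ.powersetCard j).filter
        (fun K : Finset X => Set.InjOn F (K : Set X))).card * (N - 2*j) := by
  classical
  apply Finset.card_mul_le_card_mul (fun K K' => K' ⊆ K)
  · -- each (j+1)-set has at least j+1 subsets of size j
    intro K hK
    rw [mem_filter, mem_powersetCard] at hK
    obtain ⟨⟨-, hcard⟩, hinj⟩ := hK
    rw [bipartiteAbove]
    calc j + 1 = K.card := hcard.symm
    _ ≤ _ := by
      apply Finset.card_le_card_of_injOn (fun x => K.erase x)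
      · intro x hx
        simp only [Finset.mem_coe, mem_filter, mem_powersetCard]
        refine ⟨⟨⟨subset_univ _, ?_⟩, ?_⟩, erase_subset _ _⟩
        · rw [card_erase_of_mem hx, hcard]; omega
        · exact hinj.mono (by exact_mod_cast coe_subset.2 (erase_subset _ _))
      · intro x hx y hy hxy
        simp only at hxy
        by_contra hne
        have hyk : y ∈ K.erase x := mem_erase.2 ⟨fun h => hne h.symm, hy⟩
        rw [hxy] at hyk
        exact (mem_erase.1 hyk).1 rfl
  · -- each j-set extends in at most N - 2j ways
    intro K' hK'
    rw [mem_filter, mem_powersetCard] at hK'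
    obtain ⟨⟨-, hcard⟩, hinj⟩ := hK'
    have hGcard : (Finset.univ.filter (fun x => F x ∉ K'.image F)).card = N - 2*j := by
      have hsplit := Finset.card_filter_add_card_filter_not
        (s := (Finset.univ : Finset X)) (p := fun x => F x ∈ K'.image F)
      have hbad : (Finset.univ.filter (fun x => F x ∈ K'.image F)).card = 2*j := by
        have hset : (Finset.univ.filter (fun x => F x ∈ K'.image F)) =
            (K'.image F).biUnion (fun y => Finset.univ.filter (fun x => F x = y)) := by
          ext x
          simp [mem_biUnion]
        rw [hset, card_biUnion]
        · rw [Finset.sum_congr rfl (fun y hy => hF y (image_subset_image (subset_univ K') hy))]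
          rw [Finset.sum_const, smul_eq_mul, Finset.card_image_of_injOn hinj, hcard, mul_comm]
        · intro y hy z hz hyz
          rw [Function.onFun, Finset.disjoint_left]
          intro x hx1 hx2
          rw [mem_filter] at hx1 hx2
          exact hyz (hx1.2 ▸ hx2.2)
      have hu : (Finset.univ : Finset X).card = N := by rw [← hN]; rfl
      omega
    rw [← hGcard]
    apply Finset.card_le_card_of_surjOn (fun x => insert x K')
    intro K hK
    rw [Finset.mem_coe, mem_bipartiteBelow, mem_filter, mem_powersetCard] at hK
    obtain ⟨⟨⟨-, hKcard⟩, hKinj⟩, hsub⟩ := hK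
    have hdiff : (K \ K').card = 1 := by
      rw [card_sdiff_of_subset hsub, hKcard, hcard]; omega
    obtain ⟨x, hx⟩ := Finset.card_eq_one.1 hdiff
    have hxK : x ∈ K ∧ x ∉ K' := by
      have : x ∈ K \ K' := hx ▸ mem_singleton_self x
      exact ⟨(mem_sdiff.1 this).1, (mem_sdiff.1 this).2⟩
    refine ⟨x, ?_, ?_⟩
    · rw [Finset.mem_coe, mem_filter]
      refine ⟨mem_univ _, ?_⟩
      rw [mem_image]
      rintro ⟨x', hx', hFx⟩
      exact hxK.2 (hKinj (hsub hx') hxK.1 hFx ▸ hx')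
    · simp only
      apply Finset.eq_of_subset_of_card_le
      · exact insert_subset hxK.1 hsub
      · rw [hKcard, card_insert_of_notMem hxK.2, hcard]

lemma count_lemma {X Y : Type*} [Fintype X] [DecidableEq X] [DecidableEq Y] (F : X → Y)
    (hF : ∀ y ∈ Finset.image F Finset.univ,
      (Finset.univ.filter (fun x => F x = y)).card = 2)
    (N : ℕ) (hN : Fintype.card X = N) : ∀ k : ℕ,
    ((Finset.univ.powersetCard k).filter
        (fun K : Finset X => Set.InjOn F (K : Set X))).card * k.factorial ≤
    ∏ i ∈ Finset.range k, (N - 2*i)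
  | 0 => by
    simp only [Nat.factorial_zero, mul_one, Finset.range_zero, Finset.prod_empty]
    calc ((Finset.univ.powersetCard 0).filter _).card
        ≤ ((Finset.univ : Finset X).powersetCard 0).card := Finset.card_filter_le _ _
      _ = 1 := by simp
  | (k+1) => by
    have h1 := step_lemma F hF N hN k
    have h2 := count_lemma F hF N hN k
    rw [Finset.prod_range_succ, Nat.factorial_succ]
    calc ((Finset.univ.powersetCard (k+1)).filter
          (fun K : Finset X => Set.InjOn F (K : Set X))).card * ((k+1) * k.factorial)
        = (((Finset.univ.powersetCard (k+1)).filter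
          (fun K : Finset X => Set.InjOn F (K : Set X))).card * (k+1)) * k.factorial := by ring
      _ ≤ (((Finset.univ.powersetCard k).filter
          (fun K : Finset X => Set.InjOn F (K : Set X))).card * (N - 2*k)) * k.factorial :=
          Nat.mul_le_mul_right _ h1
      _ = (((Finset.univ.powersetCard k).filter
          (fun K : Finset X => Set.InjOn F (K : Set X))).card * k.factorial) * (N - 2*k) := by ring
      _ ≤ (∏ i ∈ Finset.range k, (N - 2*i)) * (N - 2*k) := Nat.mul_le_mul_right _ h2

lemma even_lemma {X Y : Type*} [Fintype X] [DecidableEq X] [DecidableEq Y] (F : X → Y)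
    (hF : ∀ y ∈ Finset.image F Finset.univ,
      (Finset.univ.filter (fun x => F x = y)).card = 2)
    (N : ℕ) (hN : Fintype.card X = N) :
    N = 2 * (Finset.image F Finset.univ).card := by
  classical
  have h := Finset.card_eq_sum_card_fiberwise
    (s := (Finset.univ : Finset X)) (t := Finset.image F Finset.univ) (f := F)
    (fun x _ => Finset.mem_image_of_mem F (Finset.mem_univ x))
  rw [Finset.sum_congr rfl hF, Finset.sum_const, smul_eq_mul, mul_comm] at h
  rw [← hN, ← Finset.card_univ, h]

lemma part1_lemma {X Y : Type*} [Fintype X] [DecidableEq X] [DecidableEq Y] (F : X → Y) (hF : ∀ y ∈ Finset.image F Finset.univ,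
      (Finset.univ.filter (fun x => F x = y)).card = 2)
    (N k : ℕ) (hN : Fintype.card X = N) (hk : k ≤ N)
    (hcnt : ((Finset.univ.powersetCard k).filter
        (fun K : Finset X => Set.InjOn F (K : Set X))).card * k.factorial ≤
      ∏ i ∈ Finset.range k, (N - 2*i))
    (heven : N = 2 * (Finset.image F Finset.univ).card) :
    (((Finset.univ.powersetCard k).filter
        (fun K : Finset X => Set.InjOn F (K : Set X))).card : ℝ) /
      ((Finset.univ.powersetCard k) : Finset (Finset X)).card ≤
      ∏ i ∈ Finset.range k, (1 - (i : ℝ) / ((N : ℝ) - i)) := by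
  classical
  set m := (Finset.image F Finset.univ).card with hm
  set A := (Finset.univ.powersetCard k).filter
      (fun K : Finset X => Set.InjOn F (K : Set X)) with hA
  have hCpow : ((Finset.univ : Finset X).powersetCard k).card = N.choose k := by
    rw [Finset.card_powersetCard, Finset.card_univ, hN]
  have hCpos : 0 < N.choose k := Nat.choose_pos hk
  rw [hCpow]
  by_cases hkm : k ≤ m
  · -- all factors positive
    have hfac : ∀ i ∈ Finset.range k,
        (1 - (i : ℝ) / ((N : ℝ) - i)) = ((N - 2*i : ℕ) : ℝ) / ((N - i : ℕ) : ℝ) := by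
      intro i hi
      rw [Finset.mem_range] at hi
      have h2i : 2*i ≤ N := by omega
      have hiN : i ≤ N := by omega
      have hNi : (0:ℝ) < (N:ℝ) - i := by
        have : i < N := by omega
        have := Nat.cast_lt (α := ℝ) |>.2 this
        linarith
      rw [Nat.cast_sub h2i, Nat.cast_sub hiN]
      push_cast
      field_simp
      ring
    rw [Finset.prod_congr rfl hfac, Finset.prod_div_distrib]
    have hden : (∏ i ∈ Finset.range k, ((N - i : ℕ) : ℝ)) =
        ((k.factorial * N.choose k : ℕ) : ℝ) := by
      rw [← Nat.cast_prod, ← Nat.descFactorial_eq_prod_range,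
        Nat.descFactorial_eq_factorial_mul_choose]
    rw [hden]
    have hnum : (∏ i ∈ Finset.range k, ((N - 2*i : ℕ) : ℝ)) =
        ((∏ i ∈ Finset.range k, (N - 2*i) : ℕ) : ℝ) := by rw [Nat.cast_prod]
    rw [hnum]
    have hdpos : (0:ℝ) < ((k.factorial * N.choose k : ℕ) : ℝ) := by
      have : 0 < k.factorial * N.choose k := Nat.mul_pos k.factorial_pos hCpos
      exact_mod_cast this
    have hCpos' : (0:ℝ) < (N.choose k : ℝ) := by exact_mod_cast hCpos
    rw [div_le_div_iff₀ hCpos' hdpos]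
    have hcount' : ((A.card * k.factorial : ℕ) : ℝ) ≤
        ((∏ i ∈ Finset.range k, (N - 2*i) : ℕ) : ℝ) := by exact_mod_cast hcnt
    push_cast at hcount' ⊢
    nlinarith [hcount', hCpos', Nat.cast_nonneg (α := ℝ) A.card]
  · -- m < k : both sides are zero
    push_neg at hkm
    have hm1 : 1 ≤ m := by omega
    have hA0 : A.card = 0 := by
      have hz : (∏ i ∈ Finset.range k, (N - 2*i)) = 0 :=
        Finset.prod_eq_zero (Finset.mem_range.2 hkm) (by omega)
      have := hcnt
      rw [hz, Nat.le_zero, Nat.mul_eq_zero] at this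
      rcases this with h | h
      · exact h
      · exact absurd h k.factorial_ne_zero
    have hp0 : (∏ i ∈ Finset.range k, (1 - (i : ℝ) / ((N : ℝ) - i))) = 0 := by
      apply Finset.prod_eq_zero (Finset.mem_range.2 hkm)
      have hNm : (N:ℝ) = 2*m := by exact_mod_cast heven
      have hmne : (m:ℝ) ≠ 0 := by
        have : (0:ℝ) < m := by exact_mod_cast hm1
        linarith
      rw [hNm]
      have : (2:ℝ)*m - m = m := by ring
      rw [this, div_self hmne]
      ring
    rw [hA0, hp0]
    simp


lemma part2_lemma (N k m : ℕ) (hk : k ≤ N) (heven : N = 2 * m) :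
    ∏ i ∈ Finset.range k, (1 - (i : ℝ) / ((N : ℝ) - i)) ≤
      (1 - ((k : ℝ) - 1) / (2 * N)) ^ (k - 1) := by
  rcases Nat.eq_zero_or_pos k with hk0 | hk1
  · subst hk0; simp
  by_cases hkm : k ≤ m
  case neg =>
    -- product is zero, RHS nonneg
    push_neg at hkm
    have hm1 : 1 ≤ m := by omega
    have hp0 : (∏ i ∈ Finset.range k, (1 - (i : ℝ) / ((N : ℝ) - i))) = 0 := by
      apply Finset.prod_eq_zero (Finset.mem_range.2 hkm)
      have hNm : (N:ℝ) = 2*m := by exact_mod_cast heven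
      have hmne : (m:ℝ) ≠ 0 := by
        have : (0:ℝ) < m := by exact_mod_cast hm1
        linarith
      rw [hNm, show (2:ℝ)*m - m = m by ring, div_self hmne]; ring
    rw [hp0]
    apply pow_nonneg
    have hN1 : (1:ℝ) ≤ N := by exact_mod_cast (by omega : 1 ≤ N)
    have hkN : (k:ℝ) ≤ N := by exact_mod_cast hk
    rw [sub_nonneg, div_le_one (by linarith)]
    linarith
  case pos =>
    have hNm : (N:ℝ) = 2*m := by exact_mod_cast heven
    have hm1 : 1 ≤ m := by omega
    have hN2 : (2:ℝ) ≤ N := by exact_mod_cast (by omega : 2 ≤ N)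
    set c : ℝ := ((k : ℝ) - 1) / (2 * N) with hc
    have hk1R : (1:ℝ) ≤ k := by exact_mod_cast hk1
    have hc0 : 0 ≤ c := by
      apply div_nonneg (by linarith) (by linarith)
    have hc1 : c ≤ 1 := by
      rw [hc, div_le_one (by linarith)]
      have : (k:ℝ) ≤ N := by exact_mod_cast hk
      linarith
    set f : ℕ → ℝ := fun i => 1 - (i : ℝ) / ((N : ℝ) - i) with hf
    clear_value c f
    -- basic facts about factors, for i ≤ k-1
    have hfact : ∀ i, i < k → 0 ≤ f i ∧ f i ≤ 1 - (i:ℝ)/N := by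
      intro i hi
      have hik : i ≤ m - 1 := by omega
      have h2i : (2:ℝ)*i ≤ N := by
        have : 2*i ≤ N := by omega
        exact_mod_cast this
      have hi0 : (0:ℝ) ≤ i := Nat.cast_nonneg i
      have hNi : (0:ℝ) < (N:ℝ) - i := by linarith
      constructor
      · rw [hf]; simp only
        rw [sub_nonneg, div_le_one hNi]; linarith
      · rw [hf]; simp only
        have h1 : (i:ℝ)/N ≤ (i:ℝ)/((N:ℝ)-i) :=
          div_le_div_of_nonneg_left hi0 hNi (by linarith) |>.trans_eq rfl
        linarith
    -- pairwise bound
    have hpair : ∀ i ∈ Finset.range k, f i * f (k - 1 - i) ≤ (1 - c)^2 := by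
      intro i hi
      rw [Finset.mem_range] at hi
      have hj : k - 1 - i < k := by omega
      obtain ⟨h1, h2⟩ := hfact i hi
      obtain ⟨h3, h4⟩ := hfact _ hj
      have hsum : (i:ℝ)/N + ((k-1-i:ℕ):ℝ)/N ≥ 2*c := by
        have hcast : ((k-1-i:ℕ):ℝ) = (k:ℝ) - 1 - i := by
          have : (k - 1 - i : ℕ) + i + 1 = k := by omega
          have := congrArg (fun n : ℕ => (n:ℝ)) this
          push_cast at this
          linarith
        rw [hcast, hc, ← add_div,
          show (i:ℝ) + ((k:ℝ) - 1 - i) = (k:ℝ) - 1 by ring]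
        have hNpos : (0:ℝ) < N := by linarith
        rw [ge_iff_le, show 2*(((k:ℝ)-1)/(2*N)) = ((k:ℝ)-1)/N by field_simp]
      have hab : f i + f (k - 1 - i) ≤ 2 - 2*c := by linarith
      nlinarith [sq_nonneg (f i - f (k-1-i)),
        mul_nonneg (by linarith : (0:ℝ) ≤ 2 - 2*c - (f i + f (k-1-i)))
          (by linarith : (0:ℝ) ≤ 2 - 2*c + (f i + f (k-1-i)))]
    have hP0 : 0 ≤ ∏ i ∈ Finset.range k, f i :=
      Finset.prod_nonneg (fun i hi => (hfact i (Finset.mem_range.1 hi)).1)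
    have hsq : (∏ i ∈ Finset.range k, f i)^2 ≤ ((1-c)^k)^2 := by
      have hrefl : (∏ i ∈ Finset.range k, f (k - 1 - i)) = ∏ i ∈ Finset.range k, f i :=
        Finset.prod_range_reflect f k
      calc (∏ i ∈ Finset.range k, f i)^2
          = ∏ i ∈ Finset.range k, (f i * f (k - 1 - i)) := by
            rw [Finset.prod_mul_distrib, hrefl]; ring
        _ ≤ ∏ i ∈ Finset.range k, (1-c)^2 := by
            apply Finset.prod_le_prod
            · intro i hi
              rw [Finset.mem_range] at hi
              exact mul_nonneg (hfact i hi).1 (hfact _ (by omega : k-1-i < k)).1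
            · exact hpair
        _ = ((1-c)^k)^2 := by
            rw [Finset.prod_const, Finset.card_range, ← pow_mul, ← pow_mul, mul_comm]
    have hPk : (∏ i ∈ Finset.range k, f i) ≤ (1-c)^k := by
      have h1c : 0 ≤ (1-c)^k := pow_nonneg (by linarith) k
      nlinarith [hsq, hP0, h1c]
    calc (∏ i ∈ Finset.range k, f i) ≤ (1-c)^k := hPk
      _ = (1-c)^(k-1) * (1-c) := by
          conv_lhs => rw [show k = (k-1)+1 by omega]
          rw [pow_succ]
      _ ≤ (1-c)^(k-1) := by
          have := pow_nonneg (by linarith : (0:ℝ) ≤ 1-c) (k-1)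
          nlinarith


theorem twoToOne_random_subset_no_collision_prob {X Y : Type*} [Fintype X] [DecidableEq X]
    [DecidableEq Y] (F : X → Y)
    (hF : ∀ y ∈ Finset.image F Finset.univ,
      (Finset.univ.filter (fun x => F x = y)).card = 2)
    (N k : ℕ) (hN : Fintype.card X = N) (hk : k ≤ N) :
    (((Finset.univ.powersetCard k).filter
        (fun K : Finset X => Set.InjOn F (K : Set X))).card : ℝ) /
      ((Finset.univ.powersetCard k) : Finset (Finset X)).card ≤
      ∏ i ∈ Finset.range k, (1 - (i : ℝ) / ((N : ℝ) - i)) ∧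
    ∏ i ∈ Finset.range k, (1 - (i : ℝ) / ((N : ℝ) - i)) ≤
      (1 - ((k : ℝ) - 1) / (2 * N)) ^ (k - 1) := by
  have heven := even_lemma F hF N hN
  exact ⟨part1_lemma F hF N k hN hk (count_lemma F hF N hN k) heven,
    part2_lemma N k _ hk heven⟩
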